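/- Consider the following transition system with three robots a, b, c. A global state consists of: a's position in {A₀, P₁}, b's position in {B₀, P₂}, c's position constantly C₀, and a light L(r) ∈ {NIL, M, F} for each robot r. The initial state has a at A₀, b at B₀, and all lights NIL. Call the state Configuration I if a is at A₀ and b at B₀, Configuration II if a is at P₁ and b at B₀, and Configuration III if a is at P₁ and b at P₂. When a robot r is activated it observes the positions of all robots and the lights of the robots other than itself, and acts as follows: if some other robot has light F, it does nothing; otherwise, if some other robot has light M, then if the state is Configuration II and r = b it sets L(b) := F and moves b to P₂, and otherwise it does nothing; otherwise (no M or F visible), if the state is Configuration I and r = a it sets L(a) := M and moves a to P₁, and in every other case (in particular in Configuration II) it does nothing. At each time step an arbitrary nonempty subset of robots is activated, each applying the rule; the schedule is fair, i.e., each robot is activated at infinitely many steps. Then for every fair schedule there exist times t₁ ≤ t₂ such that the state is Configuration I with all lights NIL at every time n ≤ t₁, Configuration II at every time n with t₁ < n ≤ t₂, and Configuration III at every time n > t₂; in particular the system passes through Configuration II and is eventually constant at Configuration III. -/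

import Mathlib

/-- Light colors in Algorithm COMIL. -/
inductive ILLight : Type
  | NIL | M | F
deriving DecidableEq

/-- The three robots of the −IL problem. -/
inductive ILRobot : Type
  | a | b | c
deriving DecidableEq

instance instFintypeILRobot : Fintype ILRobot :=
  ⟨{ILRobot.a, ILRobot.b, ILRobot.c}, fun x => by cases x <;> simp⟩

/-- A global state: `aPos = false` means robot `a` is at `A₀`, `aPos = true` means
it is at `P₁`; `bPos = false` means robot `b` is at `B₀`, `bPos = true` means it is
at `P₂` (robot `c` stays at `C₀` throughout); `light r` is the external light of `r`. -/
structure ILState : Type where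
  aPos : Bool
  bPos : Bool
  light : ILRobot → ILLight

/-- Configuration I: `a` at `A₀` and `b` at `B₀`. -/
abbrev ConfigI (s : ILState) : Prop := s.aPos = false ∧ s.bPos = false

/-- Configuration II: `a` at `P₁` and `b` at `B₀`. -/
abbrev ConfigII (s : ILState) : Prop := s.aPos = true ∧ s.bPos = false

/-- Configuration III: `a` at `P₁` and `b` at `P₂`. -/
abbrev ConfigIII (s : ILState) : Prop := s.aPos = true ∧ s.bPos = true

/-- The initial state: Configuration I with all lights `NIL`. -/
def ILInit : ILState := ⟨false, false, fun _ => ILLight.NIL⟩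

/-- The result of robot `r` applying COMIL's rule in state `s` (only `r`'s own
position and light may change): if `r` sees `F` it does nothing; otherwise if `r`
sees `M`, then in Configuration II robot `b` sets its light to `F` and moves to
`P₂`, and every other robot does nothing; otherwise, in Configuration I robot `a`
sets its light to `M` and moves to `P₁`, and in every other case `r` does nothing. -/
def ILAct (s : ILState) (r : ILRobot) : ILState :=
  if ∃ r' : ILRobot, r' ≠ r ∧ s.light r' = ILLight.F then s
  else if ∃ r' : ILRobot, r' ≠ r ∧ s.light r' = ILLight.M then
    if ConfigII s ∧ r = ILRobot.b then
      { s with bPos := true, light := Function.update s.light ILRobot.b ILLight.F }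
    else s
  else
    if ConfigI s ∧ r = ILRobot.a then
      { s with aPos := true, light := Function.update s.light ILRobot.a ILLight.M }
    else s

/-- Simultaneous activation of the set `A` of robots: each activated robot applies
its rule to the current state, updating only its own position and light. -/
def ILStep (s : ILState) (A : Finset ILRobot) : ILState where
  aPos := if ILRobot.a ∈ A then (ILAct s ILRobot.a).aPos else s.aPos
  bPos := if ILRobot.b ∈ A then (ILAct s ILRobot.b).bPos else s.bPos
  light := fun r => if r ∈ A then (ILAct s r).light r else s.light r


namespace COMILaux

def S1 : ILState := ILInit
def S2 : ILState := ⟨true, false, fun r => if r = ILRobot.a then ILLight.M else ILLight.NIL⟩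
def S3 : ILState := ⟨true, true, fun r =>
    if r = ILRobot.a then ILLight.M else if r = ILRobot.b then ILLight.F else ILLight.NIL⟩

instance : DecidableEq ILState
  | ⟨a1, b1, l1⟩, ⟨a2, b2, l2⟩ =>
    decidable_of_iff (a1 = a2 ∧ b1 = b2 ∧ l1 = l2) (by simp)

lemma act1 : ∀ r, ILAct S1 r = if r = ILRobot.a then S2 else S1 := by decide
lemma act2 : ∀ r, ILAct S2 r = if r = ILRobot.b then S3 else S2 := by decide
lemma act3 : ∀ r, ILAct S3 r = S3 := by decide

lemma ext' {s t : ILState} (h1 : s.aPos = t.aPos) (h2 : s.bPos = t.bPos)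
    (h3 : s.light = t.light) : s = t := by cases s; cases t; simp_all

lemma step1 (A : Finset ILRobot) (ha : ILRobot.a ∈ A) : ILStep S1 A = S2 := by
  refine ext' ?_ ?_ ?_
  · simp only [ILStep, act1]; simp [ha, S1, S2, ILInit]
  · simp only [ILStep, act1]; simp [ha, S1, S2, ILInit]
  · funext r; cases r <;> (simp only [ILStep, act1]; simp [ha, S1, S2, ILInit])

lemma step1' (A : Finset ILRobot) (ha : ILRobot.a ∉ A) : ILStep S1 A = S1 := by
  refine ext' ?_ ?_ ?_
  · simp only [ILStep, act1]; simp [ha, S1, S2, ILInit]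
  · simp only [ILStep, act1]; simp [ha, S1, S2, ILInit]
  · funext r; cases r <;> (simp only [ILStep, act1]; simp [ha, S1, S2, ILInit])

lemma step2 (A : Finset ILRobot) (hb : ILRobot.b ∈ A) : ILStep S2 A = S3 := by
  refine ext' ?_ ?_ ?_
  · simp only [ILStep, act2]; simp [hb, S2, S3]
  · simp only [ILStep, act2]; simp [hb, S2, S3]
  · funext r; cases r <;> (simp only [ILStep, act2]; simp [hb, S2, S3])

lemma step2' (A : Finset ILRobot) (hb : ILRobot.b ∉ A) : ILStep S2 A = S2 := by
  refine ext' ?_ ?_ ?_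
  · simp only [ILStep, act2]; simp [hb, S2, S3]
  · simp only [ILStep, act2]; simp [hb, S2, S3]
  · funext r; cases r <;> (simp only [ILStep, act2]; simp [hb, S2, S3])

lemma step3 (A : Finset ILRobot) : ILStep S3 A = S3 := by
  refine ext' ?_ ?_ ?_
  · simp only [ILStep, act3]; simp
  · simp only [ILStep, act3]; simp
  · funext r; cases r <;> (simp only [ILStep, act3]; simp)

end COMILaux

/-- Algorithm COMIL solves −IL in `FCOM` under every fair asynchronous schedule:
the run stays in Configuration I with all lights `NIL` up to some time `t₁`, is in
Configuration II strictly between `t₁` and `t₂`, and is in Configuration III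
forever after `t₂`. -/
theorem COMIL_solves_minusIL (A : ℕ → Finset ILRobot)
    (hne : ∀ n : ℕ, (A n).Nonempty)
    (hfair : ∀ (r : ILRobot) (N : ℕ), ∃ n : ℕ, N ≤ n ∧ r ∈ A n)
    (run : ℕ → ILState)
    (h0 : run 0 = ILInit)
    (hstep : ∀ n : ℕ, run (n + 1) = ILStep (run n) (A n)) :
    ∃ t₁ t₂ : ℕ, t₁ ≤ t₂ ∧
      (∀ n ≤ t₁, ConfigI (run n) ∧ ∀ r : ILRobot, (run n).light r = ILLight.NIL) ∧
      (∀ n : ℕ, t₁ < n → n ≤ t₂ → ConfigII (run n)) ∧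
      (∀ n : ℕ, t₂ < n → ConfigIII (run n)) := by
    classical
  open COMILaux in
  have ha : ∃ n, ILRobot.a ∈ A n := (hfair ILRobot.a 0).imp fun n h => h.2
  set t₁ := Nat.find ha with ht1def
  have h1 : ∀ n ≤ t₁, run n = COMILaux.S1 := by
    intro n hn
    induction n with
    | zero => simpa [COMILaux.S1] using h0
    | succ k ih =>
      have hk : ILRobot.a ∉ A k := Nat.find_min ha (by omega)
      rw [hstep k, ih (by omega), COMILaux.step1' _ hk]
  have h2 : run (t₁ + 1) = COMILaux.S2 := by
    rw [hstep t₁, h1 t₁ le_rfl, COMILaux.step1 _ (Nat.find_spec ha)]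
  have hb : ∃ n, t₁ + 1 ≤ n ∧ ILRobot.b ∈ A n := hfair ILRobot.b (t₁ + 1)
  set t₂ := Nat.find hb with ht2def
  have ht12 : t₁ + 1 ≤ t₂ := (Nat.find_spec hb).1
  have h3 : ∀ n, t₁ < n → n ≤ t₂ → run n = COMILaux.S2 := by
    intro n hn hn'
    induction n with
    | zero => omega
    | succ k ih =>
      rcases Nat.lt_or_ge t₁ k with hk | hk
      · have hbk : ILRobot.b ∉ A k := fun hmem =>
          Nat.find_min hb (m := k) (by omega) ⟨by omega, hmem⟩
        rw [hstep k, ih hk (by omega), COMILaux.step2' _ hbk]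
      · have : k = t₁ := by omega
        rw [this, h2]
  have h4 : run (t₂ + 1) = COMILaux.S3 := by
    rw [hstep t₂, h3 t₂ (by omega) le_rfl, COMILaux.step2 _ (Nat.find_spec hb).2]
  have h5 : ∀ n, t₂ < n → run n = COMILaux.S3 := by
    intro n hn
    induction n with
    | zero => omega
    | succ k ih =>
      rcases Nat.lt_or_ge t₂ k with hk | hk
      · rw [hstep k, ih hk, COMILaux.step3]
      · have : k = t₂ := by omega
        rw [this, h4]
  refine ⟨t₁, t₂, by omega, ?_, ?_, ?_⟩
  · intro n hn
    rw [h1 n hn]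
    exact ⟨⟨rfl, rfl⟩, fun r => rfl⟩
  · intro n hn hn'
    rw [h3 n hn hn']
    exact ⟨rfl, rfl⟩
  · intro n hn
    rw [h5 n hn]
    exact ⟨rfl, rfl⟩
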